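/- Let N ≥ 1, let μ₀, …, μ_N be σ-finite measures on ℝ, and let g_k : ℝ × ℝ → [0, ∞) be measurable for k = 0, …, N−1, such that the function (x₀, …, x_N) ↦ ∏_{k=0}^{N−1} g_k(x_k, x_{k+1}) is integrable with respect to the product measure μ₀ ⊗ ⋯ ⊗ μ_N. Let P be the measure on ℝ^{N+1} with this density with respect to μ₀ ⊗ ⋯ ⊗ μ_N. Then for each i ∈ {0, …, N−1}, the pushforward of P under the projection onto the pair of coordinates (i, i+1) has density (x, y) ↦ u_i(x) · g_i(x, y) · d_{i+1}(y) with respect to μ_i ⊗ μ_{i+1}, where u_i(x) = ∫ ∏_{k=0}^{i−1} g_k(x_k, x_{k+1}) d(μ₀ ⊗ ⋯ ⊗ μ_{i−1}) evaluated with x_i = x (and u_0 ≡ 1), and d_{i+1}(y) = ∫ ∏_{k=i+1}^{N−1} g_k(x_k, x_{k+1}) d(μ_{i+2} ⊗ ⋯ ⊗ μ_N) evaluated with x_{i+1} = y (and d_N ≡ 1). -/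

import Mathlib

set_option maxHeartbeats 1000000


open MeasureTheory
open scoped ENNReal

/-- The pairwise-factorized density `(x₀,…,x_N) ↦ ∏_{k=0}^{N−1} g_k(x_k, x_{k+1})`. -/
noncomputable def pathProd (N : ℕ) (g : Fin N → ℝ → ℝ → ℝ) (x : Fin (N + 1) → ℝ) : ℝ≥0∞ :=
  ∏ k : Fin N, ENNReal.ofReal (g k (x k.castSucc) (x k.succ))

/-- The "up" potential `u_i(x) = ∫ ∏_{k=0}^{i−1} g_k(x_k, x_{k+1}) d(μ₀ ⊗ ⋯ ⊗ μ_{i−1})`,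
with the `i`-th coordinate fixed at `x` (so `u_0 ≡ 1`). -/
noncomputable def upPot (N : ℕ) (μ : Fin (N + 1) → Measure ℝ) (g : Fin N → ℝ → ℝ → ℝ)
    (i : ℕ) (hi : i ≤ N) (x : ℝ) : ℝ≥0∞ :=
  ∫⁻ y : Fin i → ℝ,
    ∏ k : Fin i,
      ENNReal.ofReal (g (Fin.castLE hi k)
        ((Fin.snoc y x : Fin (i + 1) → ℝ) k.castSucc)
        ((Fin.snoc y x : Fin (i + 1) → ℝ) k.succ))
    ∂(Measure.pi fun j : Fin i => μ (Fin.castLE (by omega) j))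

/-- The "down" potential `d_i(x) = ∫ ∏_{k=i}^{N−1} g_k(x_k, x_{k+1}) d(μ_{i+1} ⊗ ⋯ ⊗ μ_N)`,
with the `i`-th coordinate fixed at `x` (so `d_N ≡ 1`). -/
noncomputable def downPot (N : ℕ) (μ : Fin (N + 1) → Measure ℝ) (g : Fin N → ℝ → ℝ → ℝ)
    (i : ℕ) (hi : i ≤ N) (x : ℝ) : ℝ≥0∞ :=
  ∫⁻ y : Fin (N - i) → ℝ,
    ∏ l : Fin (N - i),
      ENNReal.ofReal (g ⟨i + l.val, by have := l.isLt; omega⟩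
        ((Fin.cons x y : Fin (N - i + 1) → ℝ) l.castSucc)
        ((Fin.cons x y : Fin (N - i + 1) → ℝ) l.succ))
    ∂(Measure.pi fun j : Fin (N - i) => μ ⟨i + 1 + j.val, by have := j.isLt; omega⟩)

def asmPath (N i : ℕ) (p : (ℝ × ℝ) × ((Fin i → ℝ) × (Fin (N - (i + 1)) → ℝ)))
    (j : Fin (N + 1)) : ℝ :=
  if h : j.val < i then p.2.1 ⟨j.val, h⟩
  else if h2 : j.val = i then p.1.1
  else if h3 : j.val = i + 1 then p.1.2
  else p.2.2 ⟨j.val - (i + 2), by have := j.isLt; omega⟩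

variable {N i : ℕ} {p : (ℝ × ℝ) × ((Fin i → ℝ) × (Fin (N - (i + 1)) → ℝ))}

open MeasureTheory
open scoped ENNReal

lemma prod_range_split {M : Type*} [CommMonoid M] (N i : ℕ) (hi : i < N) (F : ℕ → M) :
    ∏ m ∈ Finset.range (N + 1), F m =
      ((∏ m ∈ Finset.range i, F m) * (F i * F (i + 1))) *
        ∏ j ∈ Finset.range (N - (i + 1)), F (i + 2 + j) := by
  rw [Finset.range_eq_Ico,
    ← Finset.prod_Ico_consecutive F (Nat.zero_le i) (by omega : i ≤ N + 1),
    Finset.prod_eq_prod_Ico_succ_bot (by omega : i < N + 1) F,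
    Finset.prod_eq_prod_Ico_succ_bot (by omega : i + 1 < N + 1) F,
    Finset.prod_Ico_eq_prod_range, Finset.prod_Ico_eq_prod_range]
  simp only [Nat.sub_zero, Nat.zero_add, ← Finset.range_eq_Ico]
  rw [show N + 1 - (i + 1 + 1) = N - (i + 1) by omega,
    show i + 1 + 1 = i + 2 from rfl]
  simp [mul_assoc]

lemma prod_range_splitN {M : Type*} [CommMonoid M] (N i : ℕ) (hi : i < N) (F : ℕ → M) :
    ∏ m ∈ Finset.range N, F m =
      ((∏ m ∈ Finset.range i, F m) * F i) *
        ∏ j ∈ Finset.range (N - (i + 1)), F (i + 1 + j) := by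
  rw [Finset.range_eq_Ico,
    ← Finset.prod_Ico_consecutive F (Nat.zero_le i) (by omega : i ≤ N),
    Finset.prod_eq_prod_Ico_succ_bot (by omega : i < N) F,
    Finset.prod_Ico_eq_prod_range, Finset.prod_Ico_eq_prod_range]
  simp only [Nat.sub_zero, Nat.zero_add, ← Finset.range_eq_Ico, mul_assoc]


lemma asmPath_eval_lt {m : ℕ} (hm : m < i) (h : m < N + 1) :
    asmPath N i p ⟨m, h⟩ = p.2.1 ⟨m, hm⟩ := by
  simp [asmPath, hm]

lemma asmPath_eval_i (h : i < N + 1) : asmPath N i p ⟨i, h⟩ = p.1.1 := by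
  simp [asmPath]

lemma asmPath_eval_succ (h : i + 1 < N + 1) : asmPath N i p ⟨i + 1, h⟩ = p.1.2 := by
  simp only [asmPath, Fin.val_mk]; split_ifs <;> first | rfl | omega

lemma asmPath_eval_hi {m : ℕ} (hm : i + 2 ≤ m) (h : m < N + 1) :
    asmPath N i p ⟨m, h⟩ = p.2.2 ⟨m - (i + 2), by omega⟩ := by
  simp only [asmPath, Fin.val_mk]; split_ifs <;> first | rfl | omega

lemma asmPath_snoc' (m : ℕ) (hm : m ≤ i) (h : m < N + 1) :
    asmPath N i p ⟨m, h⟩ =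
      (Fin.snoc p.2.1 p.1.1 : Fin (i + 1) → ℝ) ⟨m, by omega⟩ := by
  simp only [asmPath, Fin.snoc, Fin.val_mk]
  split_ifs <;> simp_all <;> omega

lemma asmPath_cons' (m : ℕ) (hm : i + 1 ≤ m) (h : m < N + 1) :
    asmPath N i p ⟨m, h⟩ =
      (Fin.cons p.1.2 p.2.2 : Fin (N - (i + 1) + 1) → ℝ) ⟨m - (i + 1), by omega⟩ := by
  rcases Nat.eq_or_lt_of_le hm with h' | h'
  · have e : (⟨m - (i + 1), by omega⟩ : Fin (N - (i + 1) + 1)) = 0 := by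
      ext; simp; omega
    rw [e, Fin.cons_zero]
    simp only [asmPath, Fin.val_mk]
    split_ifs <;> first | rfl | omega
  · have e : (⟨m - (i + 1), by omega⟩ : Fin (N - (i + 1) + 1)) =
        Fin.succ ⟨m - (i + 2), by omega⟩ := by
      ext; simp; omega
    rw [e, Fin.cons_succ]
    simp only [asmPath, Fin.val_mk]
    split_ifs <;> first | rfl | omega

lemma pathProd_asm (N : ℕ) (g : Fin N → ℝ → ℝ → ℝ) (i : ℕ) (hi : i < N)
    (p : (ℝ × ℝ) × ((Fin i → ℝ) × (Fin (N - (i + 1)) → ℝ))) :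
    pathProd N g (asmPath N i p) =
      ((∏ k : Fin i, ENNReal.ofReal (g (Fin.castLE hi.le k)
          ((Fin.snoc p.2.1 p.1.1 : Fin (i + 1) → ℝ) k.castSucc)
          ((Fin.snoc p.2.1 p.1.1 : Fin (i + 1) → ℝ) k.succ)))
        * ENNReal.ofReal (g ⟨i, hi⟩ p.1.1 p.1.2))
      * ∏ l : Fin (N - (i + 1)), ENNReal.ofReal (g ⟨i + 1 + l.val, by have := l.isLt; omega⟩
          ((Fin.cons p.1.2 p.2.2 : Fin (N - (i + 1) + 1) → ℝ) l.castSucc)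
          ((Fin.cons p.1.2 p.2.2 : Fin (N - (i + 1) + 1) → ℝ) l.succ)) := by
  set T : ℕ → ℝ≥0∞ := fun m =>
    if h : m < N then
      ENNReal.ofReal (g ⟨m, h⟩ (asmPath N i p ⟨m, by omega⟩) (asmPath N i p ⟨m + 1, by omega⟩))
    else 1 with hT
  have step1 : pathProd N g (asmPath N i p) = ∏ m ∈ Finset.range N, T m := by
    rw [pathProd, ← Fin.prod_univ_eq_prod_range T N]
    refine Finset.prod_congr rfl fun k _ => ?_
    simp only [hT]
    rw [dif_pos k.isLt]
    rfl
  rw [step1, prod_range_splitN N i hi T]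
  congr 1
  · congr 1
    · rw [← Fin.prod_univ_eq_prod_range T i]
      refine Finset.prod_congr rfl fun k _ => ?_
      simp only [hT]
      rw [dif_pos (show (k : ℕ) < N by have := k.isLt; omega)]
      rw [asmPath_snoc' (k : ℕ) (by have := k.isLt; omega) (by have := k.isLt; omega),
        asmPath_snoc' ((k : ℕ) + 1) (by have := k.isLt; omega) (by have := k.isLt; omega)]
      rfl
    · simp only [hT]
      rw [dif_pos hi]
      rw [asmPath_eval_i (by omega)]
      try rw [asmPath_eval_succ (by omega)]
  · rw [← Fin.prod_univ_eq_prod_range (fun m => T (i + 1 + m))]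
    refine Finset.prod_congr rfl fun l _ => ?_
    simp only [hT]
    rw [dif_pos (show i + 1 + (l : ℕ) < N by have := l.isLt; omega)]
    rw [asmPath_cons' (i + 1 + (l : ℕ)) (by omega) (by have := l.isLt; omega),
      asmPath_cons' (i + 1 + (l : ℕ) + 1) (by omega) (by have := l.isLt; omega)]
    have e1 : (⟨i + 1 + (l : ℕ) - (i + 1), by have := l.isLt; omega⟩ : Fin (N - (i + 1) + 1))
        = l.castSucc := by ext; simp only [Fin.val_mk, Fin.coe_castSucc]; omega
    have e2 : (⟨i + 1 + (l : ℕ) + 1 - (i + 1), by have := l.isLt; omega⟩ : Fin (N - (i + 1) + 1))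
        = l.succ := by ext; simp only [Fin.val_mk, Fin.val_succ]; omega
    rw [e1, e2]

lemma measurable_asmPath (N i : ℕ) : Measurable (asmPath N i) := by
  apply measurable_pi_lambda
  intro j
  unfold asmPath
  split_ifs
  · exact (measurable_pi_apply _).comp (measurable_fst.comp measurable_snd)
  · exact measurable_fst.comp measurable_fst
  · exact measurable_snd.comp measurable_fst
  · exact (measurable_pi_apply _).comp (measurable_snd.comp measurable_snd)

lemma map_asmPath (N i : ℕ) (hi : i < N) (μ : Fin (N + 1) → Measure ℝ)
    [∀ j, SigmaFinite (μ j)] :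
    Measure.map (asmPath N i)
      (((μ ⟨i, by omega⟩).prod (μ ⟨i + 1, by omega⟩)).prod
        ((Measure.pi fun j : Fin i => μ ⟨j.val, by omega⟩).prod
          (Measure.pi fun j : Fin (N - (i + 1)) => μ ⟨i + 2 + j.val, by omega⟩)))
      = Measure.pi μ := by
  refine (Measure.pi_eq fun s hs => ?_).symm
  rw [Measure.map_apply (measurable_asmPath N i) (MeasurableSet.univ_pi hs)]
  have hpre : asmPath N i ⁻¹' Set.univ.pi s =
      ((s ⟨i, by omega⟩ ×ˢ s ⟨i + 1, by omega⟩) ×ˢ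
        ((Set.univ.pi fun j : Fin i => s ⟨j.val, by omega⟩) ×ˢ
          (Set.univ.pi fun j : Fin (N - (i + 1)) => s ⟨i + 2 + j.val, by omega⟩))) := by
    ext q
    simp only [Set.mem_preimage, Set.mem_pi, Set.mem_univ, forall_true_left, Set.mem_prod]
    constructor
    · intro h
      refine ⟨⟨?_, ?_⟩, fun j => ?_, fun j => ?_⟩
      · have := h ⟨i, by omega⟩; rwa [asmPath_eval_i] at this
      · have := h ⟨i + 1, by omega⟩; rwa [asmPath_eval_succ] at this
      · have := h ⟨j.val, by omega⟩
        rwa [asmPath_eval_lt j.isLt] at this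
      · have := h ⟨i + 2 + j.val, by have := j.isLt; omega⟩
        rw [asmPath_eval_hi (by omega)] at this
        have e : (⟨i + 2 + j.val - (i + 2), by have := j.isLt; omega⟩ : Fin (N - (i + 1))) = j :=
          Fin.ext (show i + 2 + (j : ℕ) - (i + 2) = (j : ℕ) by omega)
        rwa [e] at this
    · rintro ⟨⟨h1, h2⟩, h3, h4⟩ j
      rcases Nat.lt_trichotomy j.val i with hj | hj | hj
      · have : j = ⟨j.val, j.isLt⟩ := by simp
        rw [this, asmPath_eval_lt hj]
        exact h3 ⟨j.val, hj⟩
      · have : j = ⟨i, by omega⟩ := by ext; simp [hj]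
        rw [this, asmPath_eval_i]; exact h1
      · rcases Nat.eq_or_lt_of_le hj with hj' | hj'
        · have : j = ⟨i + 1, by omega⟩ := by ext; simp; omega
          rw [this, asmPath_eval_succ]; exact h2
        · have : j = ⟨j.val, j.isLt⟩ := by simp
          rw [this, asmPath_eval_hi (by omega)]
          have h5 := h4 ⟨j.val - (i + 2), by have := j.isLt; omega⟩
          convert h5 using 2
          exact Fin.ext (by simp only [Fin.val_mk]; omega)
  rw [hpre, Measure.prod_prod, Measure.prod_prod, Measure.prod_prod, Measure.pi_pi, Measure.pi_pi]
  set F : ℕ → ℝ≥0∞ := fun m => if h : m < N + 1 then μ ⟨m, h⟩ (s ⟨m, h⟩) else 1 with hF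
  have h0 : ∏ j : Fin (N + 1), μ j (s j) = ∏ m ∈ Finset.range (N + 1), F m := by
    rw [← Fin.prod_univ_eq_prod_range]
    exact Finset.prod_congr rfl fun j _ => by simp [hF, j.isLt, Nat.le_of_lt_succ j.isLt]
  have hA : ∏ m ∈ Finset.range i, F m = ∏ j : Fin i, μ ⟨j.val, by omega⟩ (s ⟨j.val, by omega⟩) := by
    rw [← Fin.prod_univ_eq_prod_range]
    exact Finset.prod_congr rfl fun j _ => by simp [hF, show (j : ℕ) < N + 1 by have := j.isLt; omega, show (j : ℕ) ≤ N by have := j.isLt; omega]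
  have hB : ∏ m ∈ Finset.range (N - (i + 1)), F (i + 2 + m)
      = ∏ j : Fin (N - (i + 1)), μ ⟨i + 2 + j.val, by have := j.isLt; omega⟩
          (s ⟨i + 2 + j.val, by have := j.isLt; omega⟩) := by
    rw [← Fin.prod_univ_eq_prod_range (fun m => F (i + 2 + m))]
    exact Finset.prod_congr rfl fun j _ => by
      simp [hF, show i + 2 + (j : ℕ) < N + 1 by have := j.isLt; omega, show i + 2 + (j : ℕ) ≤ N by have := j.isLt; omega]
  rw [h0, prod_range_split N i hi F, hA, hB, hF]
  simp only [dif_pos (show i < N + 1 by omega), dif_pos (show i + 1 < N + 1 by omega)]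
  ring

lemma measurable_snoc_apply {n : ℕ} (a : ℝ) (j : Fin (n + 1)) :
    Measurable fun y : Fin n → ℝ => (Fin.snoc y a : Fin (n + 1) → ℝ) j := by
  induction j using Fin.lastCases with
  | last => simp only [Fin.snoc_last]; exact measurable_const
  | cast k => simp only [Fin.snoc_castSucc]; exact measurable_pi_apply k

lemma measurable_cons_apply {n : ℕ} (b : ℝ) (j : Fin (n + 1)) :
    Measurable fun z : Fin n → ℝ => (Fin.cons b z : Fin (n + 1) → ℝ) j := by
  induction j using Fin.cases with
  | zero => simp only [Fin.cons_zero]; exact measurable_const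
  | succ k => simp only [Fin.cons_succ]; exact measurable_pi_apply k


/-- Two-time joint marginal at consecutive times of a pairwise-factorized measure: if `P`
has density `∏_k g_k(x_k, x_{k+1})` with respect to `μ₀ ⊗ ⋯ ⊗ μ_N`, then the joint law of
the coordinates `(i, i+1)` under `P` has density `(x, y) ↦ u_i(x)·g_i(x,y)·d_{i+1}(y)`
with respect to `μ_i ⊗ μ_{i+1}`. -/
theorem map_pair_withDensity_pathProd (N : ℕ) (hN : 1 ≤ N)
    (μ : Fin (N + 1) → Measure ℝ) (hμ : ∀ j, SigmaFinite (μ j))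
    (g : Fin N → ℝ → ℝ → ℝ)
    (hg : ∀ k, Measurable (Function.uncurry (g k)))
    (hg0 : ∀ k x y, 0 ≤ g k x y)
    (hint : (∫⁻ x : Fin (N + 1) → ℝ, pathProd N g x ∂(Measure.pi μ)) ≠ ⊤) :
    ∀ i : Fin N,
      Measure.map (fun x : Fin (N + 1) → ℝ => (x i.castSucc, x i.succ))
          ((Measure.pi μ).withDensity (pathProd N g))
        = ((μ i.castSucc).prod (μ i.succ)).withDensity fun p =>
            upPot N μ g i.val i.isLt.le p.1
              * ENNReal.ofReal (g i p.1 p.2)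
              * downPot N μ g (i.val + 1) i.isLt p.2 := by
  intro i
  haveI : ∀ j, SigmaFinite (μ j) := hμ
  have hi : (i : ℕ) < N := i.isLt
  have hproj : Measurable fun x : Fin (N + 1) → ℝ => (x i.castSucc, x i.succ) :=
    (measurable_pi_apply _).prodMk (measurable_pi_apply _)
  have hpath : Measurable (pathProd N g) := by
    apply Finset.measurable_prod
    intro k _
    have hpair : Measurable fun x : Fin (N + 1) → ℝ => (x k.castSucc, x k.succ) :=
      (measurable_pi_apply _).prodMk (measurable_pi_apply _)
    exact ENNReal.measurable_ofReal.comp ((hg k).comp hpair)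
  ext s hs
  rw [Measure.map_apply hproj hs, withDensity_apply _ (hproj hs),
    ← lintegral_indicator (hproj hs), withDensity_apply _ hs, ← lintegral_indicator hs,
    ← map_asmPath N i.val hi μ,
    lintegral_map (hpath.indicator (hproj hs)) (measurable_asmPath N i.val)]
  have hcomp : Measurable fun q : (ℝ × ℝ) × ((Fin (i : ℕ) → ℝ) × (Fin (N - ((i : ℕ) + 1)) → ℝ)) =>
      Set.indicator ((fun x : Fin (N + 1) → ℝ => (x i.castSucc, x i.succ)) ⁻¹' s)
        (pathProd N g) (asmPath N (i : ℕ) q) :=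
    (hpath.indicator (hproj hs)).comp (measurable_asmPath N (i : ℕ))
  rw [lintegral_prod _ hcomp.aemeasurable]
  refine lintegral_congr fun ab => ?_
  have e1 : (i.castSucc : Fin (N + 1)) = ⟨(i : ℕ), by omega⟩ := rfl
  have e2 : (i.succ : Fin (N + 1)) = ⟨(i : ℕ) + 1, by omega⟩ := rfl
  by_cases hab : ab ∈ s
  · set A : (Fin (i : ℕ) → ℝ) → ℝ≥0∞ := fun y =>
      ∏ k : Fin (i : ℕ), ENNReal.ofReal (g (Fin.castLE hi.le k)
        ((Fin.snoc y ab.1 : Fin ((i : ℕ) + 1) → ℝ) k.castSucc)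
        ((Fin.snoc y ab.1 : Fin ((i : ℕ) + 1) → ℝ) k.succ)) with hA
    set B : (Fin (N - ((i : ℕ) + 1)) → ℝ) → ℝ≥0∞ := fun z =>
      ∏ l : Fin (N - ((i : ℕ) + 1)),
        ENNReal.ofReal (g ⟨(i : ℕ) + 1 + l.val, by have := l.isLt; omega⟩
          ((Fin.cons ab.2 z : Fin (N - ((i : ℕ) + 1) + 1) → ℝ) l.castSucc)
          ((Fin.cons ab.2 z : Fin (N - ((i : ℕ) + 1) + 1) → ℝ) l.succ)) with hB
    have hmeasA : Measurable A := by
      apply Finset.measurable_prod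
      intro k _
      have hpair : Measurable fun y : Fin (i : ℕ) → ℝ =>
          ((Fin.snoc y ab.1 : Fin ((i : ℕ) + 1) → ℝ) k.castSucc,
           (Fin.snoc y ab.1 : Fin ((i : ℕ) + 1) → ℝ) k.succ) :=
        (measurable_snoc_apply ab.1 k.castSucc).prodMk (measurable_snoc_apply ab.1 k.succ)
      exact ENNReal.measurable_ofReal.comp ((hg _).comp hpair)
    have hmeasB : Measurable B := by
      apply Finset.measurable_prod
      intro l _
      have hpair : Measurable fun z : Fin (N - ((i : ℕ) + 1)) → ℝ =>
          ((Fin.cons ab.2 z : Fin (N - ((i : ℕ) + 1) + 1) → ℝ) l.castSucc,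
           (Fin.cons ab.2 z : Fin (N - ((i : ℕ) + 1) + 1) → ℝ) l.succ) :=
        (measurable_cons_apply ab.2 l.castSucc).prodMk (measurable_cons_apply ab.2 l.succ)
      exact ENNReal.measurable_ofReal.comp ((hg _).comp hpair)
    have hmem : ∀ q : (Fin (i : ℕ) → ℝ) × (Fin (N - ((i : ℕ) + 1)) → ℝ),
        asmPath N (i : ℕ) (ab, q)
          ∈ (fun x : Fin (N + 1) → ℝ => (x i.castSucc, x i.succ)) ⁻¹' s := by
      intro q
      simp only [Set.mem_preimage, e1, e2]
      rw [asmPath_eval_i (by omega), asmPath_eval_succ (by omega)]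
      simpa using hab
    have hu : (∫⁻ y, A y ∂(Measure.pi fun j : Fin (i : ℕ) =>
          μ ⟨j.val, by have := j.isLt; omega⟩))
        = upPot N μ g i.val i.isLt.le ab.1 := rfl
    have hd : (∫⁻ z, B z ∂(Measure.pi fun j : Fin (N - ((i : ℕ) + 1)) =>
          μ ⟨(i : ℕ) + 2 + j.val, by have := j.isLt; omega⟩))
        = downPot N μ g (i.val + 1) i.isLt ab.2 := rfl
    have hc : ENNReal.ofReal (g ⟨(i : ℕ), hi⟩ ab.1 ab.2) = ENNReal.ofReal (g i ab.1 ab.2) := rfl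
    calc (∫⁻ q, Set.indicator
            ((fun x : Fin (N + 1) → ℝ => (x i.castSucc, x i.succ)) ⁻¹' s)
            (pathProd N g) (asmPath N (i : ℕ) (ab, q))
          ∂((Measure.pi fun j : Fin (i : ℕ) => μ ⟨j.val, by have := j.isLt; omega⟩).prod
            (Measure.pi fun j : Fin (N - ((i : ℕ) + 1)) =>
              μ ⟨(i : ℕ) + 2 + j.val, by have := j.isLt; omega⟩)))
        = ∫⁻ q, ENNReal.ofReal (g ⟨(i : ℕ), hi⟩ ab.1 ab.2) * (A q.1 * B q.2)
          ∂((Measure.pi fun j : Fin (i : ℕ) => μ ⟨j.val, by have := j.isLt; omega⟩).prod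
            (Measure.pi fun j : Fin (N - ((i : ℕ) + 1)) =>
              μ ⟨(i : ℕ) + 2 + j.val, by have := j.isLt; omega⟩)) := by
          refine lintegral_congr fun q => ?_
          rw [Set.indicator_of_mem (hmem q), pathProd_asm N g (i : ℕ) hi (ab, q)]
          ring
      _ = ENNReal.ofReal (g ⟨(i : ℕ), hi⟩ ab.1 ab.2)
            * ((∫⁻ y, A y ∂(Measure.pi fun j : Fin (i : ℕ) =>
                  μ ⟨j.val, by have := j.isLt; omega⟩))
              * (∫⁻ z, B z ∂(Measure.pi fun j : Fin (N - ((i : ℕ) + 1)) =>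
                  μ ⟨(i : ℕ) + 2 + j.val, by have := j.isLt; omega⟩))) := by
          have hAB : Measurable fun q : (Fin (i : ℕ) → ℝ) × (Fin (N - ((i : ℕ) + 1)) → ℝ) =>
              A q.1 * B q.2 :=
            (hmeasA.comp measurable_fst).mul (hmeasB.comp measurable_snd)
          rw [lintegral_const_mul _ hAB,
            lintegral_prod_mul hmeasA.aemeasurable hmeasB.aemeasurable]
      _ = Set.indicator s (fun p : ℝ × ℝ =>
            upPot N μ g i.val i.isLt.le p.1 * ENNReal.ofReal (g i p.1 p.2)
              * downPot N μ g (i.val + 1) i.isLt p.2) ab := by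
          rw [Set.indicator_of_mem hab, hu, hd, hc]
          ring
  · have hz : ∀ q : (Fin (i : ℕ) → ℝ) × (Fin (N - ((i : ℕ) + 1)) → ℝ),
        Set.indicator ((fun x : Fin (N + 1) → ℝ => (x i.castSucc, x i.succ)) ⁻¹' s)
          (pathProd N g) (asmPath N (i : ℕ) (ab, q)) = 0 := by
      intro q
      apply Set.indicator_of_notMem
      simp only [Set.mem_preimage, e1, e2]
      rw [asmPath_eval_i (by omega), asmPath_eval_succ (by omega)]
      simpa using hab
    rw [Set.indicator_of_notMem hab]
    simp only [hz, lintegral_zero]
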